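/- Let r, k, c be positive integers with c ≥ 2, and let n be an integer with 1 ≤ n ≤ ((c-1)/c)·(1 + r + k). Then the quantum integer sin(nπ/(1+r+k)) / sin(π/(1+r+k)) is at least n/c. -/

import Mathlib

open Real

noncomputable def qint (r k n : ℕ) : ℝ :=
  Real.sin (n * Real.pi / (1 + r + k)) / Real.sin (Real.pi / (1 + r + k))

lemma sin_chord {t T : ℝ} (ht : 0 ≤ t) (hT : t ≤ T) (hT0 : 0 < T) (hTpi : T ≤ π) :
    t / T * Real.sin T ≤ Real.sin t := by
  have hb0 : 0 ≤ t / T := div_nonneg ht hT0.le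
  have hb1 : t / T ≤ 1 := (div_le_one hT0).mpr hT
  have h := (strictConcaveOn_sin_Icc.concaveOn).2
    (show (0:ℝ) ∈ Set.Icc 0 π from ⟨le_rfl, pi_pos.le⟩)
    (show T ∈ Set.Icc 0 π from ⟨hT0.le, hTpi⟩)
    (show (0:ℝ) ≤ 1 - t / T by linarith) hb0 (by ring)
  have ht' : (1 - t / T) • (0 : ℝ) + (t / T) • T = t := by
    field_simp
    simp [smul_eq_mul, hT0.ne']
  rw [ht'] at h
  simpa [Real.sin_zero, smul_eq_mul] using h

lemma key_c (c : ℕ) (hc : 2 ≤ c) : ((c : ℝ) - 1) * π ≤ (c : ℝ) ^ 2 * Real.sin (π / c) := by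
  rcases Nat.lt_or_ge c 4 with h4 | h4
  · interval_cases c
    · -- c = 2
      norm_num [Real.sin_pi_div_two]
      nlinarith [pi_lt_d2]
    · -- c = 3
      rw [show π / (3:ℕ) = π / 3 by norm_num, Real.sin_pi_div_three]
      have h3 : (1.7:ℝ) ≤ Real.sqrt 3 := by
        rw [show (1.7:ℝ) = Real.sqrt (1.7^2) by rw [Real.sqrt_sq]; norm_num]
        apply Real.sqrt_le_sqrt; norm_num
      nlinarith [pi_lt_d2]
  · have hc0 : (0:ℝ) < c := by positivity
    have hc4 : (4:ℝ) ≤ c := by exact_mod_cast h4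
    set y : ℝ := π / c with hy
    have hy0 : 0 < y := div_pos pi_pos hc0
    have hy1 : y ≤ 1 := by
      rw [hy, div_le_one hc0]
      nlinarith [pi_lt_d2]
    have hs : y - y^3/4 < Real.sin y := by
      have := Real.sin_gt_sub_cube hy0; nlinarith [pow_pos hy0 3]
    have hyc : y * c = π := by
      rw [hy, div_mul_cancel₀ _ (ne_of_gt hc0)]
    have h1 : (c:ℝ)^2 * (y - y^3/4) ≤ (c:ℝ)^2 * Real.sin y :=
      mul_le_mul_of_nonneg_left hs.le (sq_nonneg _)
    have h2 : (c:ℝ)^2 * y = c * π := by rw [hy]; field_simp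
    have h3 : (c:ℝ)^2 * y^3 = π^2 * y := by rw [hy]; field_simp
    nlinarith [h1, h2, h3, pi_gt_three, pi_lt_d2, hy0.le,
      mul_le_mul_of_nonneg_left hy1 pi_pos.le]

theorem qint_lower_bound (r k c : ℕ) (hr : 0 < r) (hk : 0 < k) (hc : 2 ≤ c)
    (n : ℕ) (hn1 : 1 ≤ n)
    (hn2 : (n : ℝ) ≤ (((c : ℝ) - 1) / c) * (1 + r + k)) :
    qint r k n ≥ (n : ℝ) / c := by
  have hcR : (2:ℝ) ≤ c := by exact_mod_cast hc
  have hc0 : (0:ℝ) < c := by linarith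
  have hN : (3:ℝ) ≤ 1 + (r:ℝ) + k := by
    have : (1:ℝ) ≤ r := by exact_mod_cast hr
    have : (1:ℝ) ≤ k := by exact_mod_cast hk
    linarith [show (1:ℝ) ≤ r from by exact_mod_cast hr]
  have hN0 : (0:ℝ) < 1 + (r:ℝ) + k := by linarith
  set x : ℝ := π / (1 + (r:ℝ) + k) with hx
  have hx0 : 0 < x := div_pos pi_pos hN0
  have hxpi : x < π := by
    rw [hx, div_lt_iff₀ hN0]
    nlinarith [pi_pos]
  have hsinx : 0 < Real.sin x := Real.sin_pos_of_pos_of_lt_pi hx0 hxpi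
  have hn0 : (1:ℝ) ≤ n := by exact_mod_cast hn1
  set T : ℝ := π - π / c with hT
  have hT0 : 0 < T := by
    rw [hT]
    have : π / c ≤ π / 2 := by
      apply div_le_div_of_nonneg_left pi_pos.le (by norm_num) hcR
    linarith [pi_pos]
  have hTpi : T ≤ π := by
    rw [hT]; have : 0 < π / c := div_pos pi_pos hc0; linarith
  have hnxT : (n : ℝ) * x ≤ T := by
    rw [hT, hx]
    have h1 : (n:ℝ) / (1 + r + k) ≤ ((c:ℝ) - 1) / c := by
      rw [div_le_div_iff₀ hN0 hc0]
      calc (n:ℝ) * c ≤ (((c:ℝ) - 1) / c * (1 + r + k)) * c := by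
            apply mul_le_mul_of_nonneg_right hn2 hc0.le
        _ = ((c:ℝ) - 1) * (1 + r + k) := by field_simp
    calc (n:ℝ) * (π / (1 + r + k)) = (n:ℝ) / (1 + r + k) * π := by ring
      _ ≤ ((c:ℝ) - 1) / c * π := mul_le_mul_of_nonneg_right h1 pi_pos.le
      _ = π - π / c := by field_simp
  have hnx0 : 0 ≤ (n:ℝ) * x := by positivity
  have hchord := sin_chord hnx0 hnxT hT0 hTpi
  have hsinT : Real.sin T = Real.sin (π / c) := by rw [hT, Real.sin_pi_sub]
  have hkey := key_c c hc
  -- sin (n x) ≥ n x / c ≥ n sin x / c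
  have h2 : (n:ℝ) * x / c ≤ Real.sin ((n:ℝ) * x) := by
    have hTval : T = ((c:ℝ) - 1) * π / c := by rw [hT]; field_simp
    have hkey' : ((c:ℝ) - 1) * π / c ≤ c * Real.sin (π / c) := by
      rw [div_le_iff₀ hc0]; nlinarith [hkey]
    calc (n:ℝ) * x / c
        ≤ (n:ℝ) * x / T * Real.sin T := by
          have he : (n:ℝ) * x / T * Real.sin T = (n:ℝ) * x * Real.sin T / T := by ring
          have hT0' : (0:ℝ) < ((c:ℝ) - 1) * π / c := hTval ▸ hT0
          rw [he, hsinT, hTval, div_le_div_iff₀ hc0 hT0']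
          nlinarith [mul_le_mul_of_nonneg_left hkey' hnx0]
      _ ≤ Real.sin ((n:ℝ) * x) := hchord
  have h3 : Real.sin x ≤ x := Real.sin_le hx0.le
  have h4 : (n:ℝ) / c * Real.sin x ≤ Real.sin ((n:ℝ) * x) := by
    calc (n:ℝ) / c * Real.sin x ≤ (n:ℝ) / c * x := by
          apply mul_le_mul_of_nonneg_left h3 (by positivity)
      _ = (n:ℝ) * x / c := by ring
      _ ≤ _ := h2
  have : (n:ℝ) / c ≤ Real.sin ((n:ℝ) * x) / Real.sin x := by
    rw [le_div_iff₀ hsinx]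
    exact h4
  simpa [qint, ge_iff_le, hx, mul_div_assoc] using this
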